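/- For every λ ∈ ℂ, z ∈ ℂ and m ∈ ℝ, the matrix identity M·U·M⁻¹ = 𝐔 holds, where M = [[0, 0, 1], [0, 1, 0], [−i, 0, 0]], U = [[λ, 0, 1], [i·z, 0, 0], [m, conj(z), −λ]], and 𝐔 = [[i·ζ, A, i·B], [0, 0, −conj(A)], [−i, 0, −i·ζ]] with the substitutions ζ = i·λ, A = conj(z), B = m. In other words, the spatial Lax matrix of the Yajima–Oikawa system is gauge-equivalent by the constant matrix M to the spatial Lax matrix used by Wright. -/
import Mathlib


open Matrix Complex

noncomputable section

/-- The spatial Lax matrix of the YO system is gauge-equivalent by the constant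
matrix `M` to Wright's spatial Lax matrix, under `ζ = iλ`, `A = conj z`, `B = m`. -/
theorem gauge_equivalence (lam z : ℂ) (m : ℝ)
    (M U Uw : Matrix (Fin 3) (Fin 3) ℂ)
    (hM : M = !![0, 0, 1; 0, 1, 0; -Complex.I, 0, 0])
    (hU : U = !![lam, 0, 1;
                 Complex.I * z, 0, 0;
                 (m : ℂ), (starRingEnd ℂ) z, -lam])
    (hUw : Uw = !![Complex.I * (Complex.I * lam), (starRingEnd ℂ) z, Complex.I * (m : ℂ);
                 0, 0, -(starRingEnd ℂ) ((starRingEnd ℂ) z);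
                 -Complex.I, 0, -Complex.I * (Complex.I * lam)]) :
    M * U * M⁻¹ = Uw := by
  have hdet : IsUnit M.det := by
    subst hM
    simp [Matrix.det_fin_three, Complex.I_ne_zero]
  haveI := Matrix.invertibleOfIsUnitDet M hdet
  rw [Matrix.mul_inv_eq_iff_eq_mul_of_invertible]
  subst hM hU hUw
  have h3 : (Complex.I)^3 = -Complex.I := by
    rw [pow_succ, Complex.I_sq]; ring
  ext i j
  fin_cases i <;> fin_cases j <;>
    simp [Matrix.mul_apply, Fin.sum_univ_succ] 
  all_goals (try ring_nf)
  all_goals (try simp [Complex.I_sq, h3])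
end
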